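/- arXiv:2109.05452 — 2 statements merged into one kernel-verified Lean document; each statement's English description precedes it below -/
import Mathlib

section
/- For all integers a, d with d > 3a > 0, one has b_{a,d} ≥ u_{0,d-2} - a, where b_{a,d} is defined by a(3d+1) + (d+1)b_{a,d} + c_{a,d} = binom(d+3,3), 0 ≤ c_{a,d} ≤ d, and u_{0,d-2} is defined by (d-1)u_{0,d-2} - v_{0,d-2} = binom(d+1,3), 0 ≤ v_{0,d-2} ≤ d-2. -/
set_option maxHeartbeats 1000000

lemma six_choose_three (n : ℕ) : 6 * (n+3).choose 3 = (n+1)*(n+2)*(n+3) := by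
  induction n with
  | zero => decide
  | succ k ih =>
    have h2 : 2 * (k+3).choose 2 = (k+2)*(k+3) := by
      rw [Nat.choose_two_right, show k+3-1 = k+2 from rfl, Nat.mul_comm (k+3) (k+2),
        Nat.mul_div_cancel' (Nat.even_mul_succ_self (k+2)).two_dvd]
    have hs : (k+4).choose 3 = (k+3).choose 2 + (k+3).choose 3 :=
      Nat.choose_succ_succ (k+3) 2
    rw [show k+1+3 = k+4 from rfl, hs]
    nlinarith [ih, h2]

/-- For all integers `a, d` with `d > 3a > 0`, `b_{a,d} ≥ u_{0,d-2} - a`. -/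
theorem stmt_5 (a d : ℕ) (ha : 0 < a) (had : 3 * a < d) (b c u v : ℤ)
    (hc0 : 0 ≤ c) (hcd : c ≤ (d : ℤ))
    (hbc : (a : ℤ) * (3 * (d : ℤ) + 1) + ((d : ℤ) + 1) * b + c = ((d + 3).choose 3 : ℤ))
    (hv0 : 0 ≤ v) (hvd : v ≤ (d : ℤ) - 2)
    (huv : ((d : ℤ) - 1) * u - v = ((d + 1).choose 3 : ℤ)) :
    b ≥ u - (a : ℤ) := by
  obtain ⟨m, rfl⟩ : ∃ m, d = m + 4 := ⟨d - 4, by omega⟩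
  have hm : (0:ℤ) ≤ (m:ℤ) := Int.natCast_nonneg m
  have hC1 : ((m + 4 + 3).choose 3 : ℤ) * 6 = ((m:ℤ)+5)*((m:ℤ)+6)*((m:ℤ)+7) := by
    have h := six_choose_three (m+4)
    zify at h
    linear_combination h
  have hC2 : ((m + 4 + 1).choose 3 : ℤ) * 6 = ((m:ℤ)+3)*((m:ℤ)+4)*((m:ℤ)+5) := by
    have h := six_choose_three (m+2)
    zify at h
    linear_combination h
  set D : ℤ := (m:ℤ) + 4 with hD
  have hDd : ((m + 4 : ℕ) : ℤ) = D := by push_cast; ring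
  rw [hDd] at hbc huv hcd hvd
  have hD4 : (4:ℤ) ≤ D := by rw [hD]; linarith
  have key : 6*(D^2-1)*(b - u + a) =
      (D^2-1)*(4*D+6) - 12*(a:ℤ)*D*(D-1) - 6*(D-1)*c - 6*(D+1)*v := by
    linear_combination 6*(D-1)*hbc - 6*(D+1)*huv + (D-1)*hC1 - (D+1)*hC2
  have ha' : (1:ℤ) ≤ (a:ℤ) := by exact_mod_cast ha
  have had' : 3*(a:ℤ) ≤ D - 1 := by
    have h1 : (3*a+1 : ℕ) ≤ m+4 := by omega
    have h2 : ((3*a+1:ℕ):ℤ) ≤ ((m+4:ℕ):ℤ) := by exact_mod_cast h1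
    rw [hDd] at h2; push_cast at h2; linarith
  have hDD : (0:ℤ) ≤ 4*D*(D-1) := by nlinarith
  have t1 : 6*(D-1)*c ≤ 6*(D-1)*D :=
    mul_le_mul_of_nonneg_left hcd (by linarith : (0:ℤ) ≤ 6*(D-1))
  have t2 : 6*(D+1)*v ≤ 6*(D+1)*(D-2) :=
    mul_le_mul_of_nonneg_left hvd (by linarith : (0:ℤ) ≤ 6*(D+1))
  have t3 : 4*D*(D-1)*(3*(a:ℤ)) ≤ 4*D*(D-1)*(D-1) :=
    mul_le_mul_of_nonneg_left had' hDD
  by_contra h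
  push_neg at h
  have hb : b - u + a ≤ -1 := by omega
  have t4 : 6*(D^2-1)*(b - u + a) ≤ 6*(D^2-1)*(-1) :=
    mul_le_mul_of_nonneg_left hb (by nlinarith : (0:ℤ) ≤ 6*(D^2-1))
  nlinarith [key, t1, t2, t3, t4, hD4, sq_nonneg D]
end

section
/- For all integers a, d with d - 1 > 3a > 0, one has b_{a,d-1} + 1 ≥ u_{0,d-3} - a, where b_{a,d-1} is defined by a(3d-2) + d·b_{a,d-1} + c_{a,d-1} = binom(d+2,3) with 0 ≤ c_{a,d-1} ≤ d-1, and u_{0,d-3} is defined by (d-2)u_{0,d-3} - v_{0,d-3} = binom(d,3) with 0 ≤ v_{0,d-3} ≤ d-3. -/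
lemma ch2_aux (n : ℕ) : (n + 2).choose 2 * 2 = (n + 1) * (n + 2) := by
  induction n with
  | zero => decide
  | succ k ih =>
    rw [show k + 1 + 2 = (k + 2) + 1 from rfl, Nat.choose_succ_succ, Nat.choose_one_right]
    ring_nf
    ring_nf at ih
    omega

lemma ch3_aux (n : ℕ) : (n + 3).choose 3 * 6 = (n + 1) * (n + 2) * (n + 3) := by
  induction n with
  | zero => decide
  | succ k ih =>
    rw [show k + 1 + 3 = (k + 3) + 1 from rfl, Nat.choose_succ_succ,
      show k + 3 = (k + 1) + 2 from rfl]
    have h2 := ch2_aux (k + 1)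
    ring_nf
    ring_nf at ih h2
    omega

/-- For all integers `a, d` with `d - 1 > 3a > 0`, `b_{a,d-1} + 1 ≥ u_{0,d-3} - a`. -/
theorem stmt_15 (a d : ℕ) (ha : 0 < a) (had : 3 * a + 1 < d) (b c u v : ℤ)
    (hc0 : 0 ≤ c) (hcd : c ≤ (d : ℤ) - 1)
    (hbc : (a : ℤ) * (3 * (d : ℤ) - 2) + (d : ℤ) * b + c = ((d + 2).choose 3 : ℤ))
    (hv0 : 0 ≤ v) (hvd : v ≤ (d : ℤ) - 3)
    (huv : ((d : ℤ) - 2) * u - v = (d.choose 3 : ℤ)) :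
    b + 1 ≥ u - (a : ℤ) := by
  obtain ⟨k, rfl⟩ : ∃ k, d = k + 5 := ⟨d - 5, by omega⟩
  have h1 : ((k + 5 + 2).choose 3 : ℤ) * 6 = (((k:ℤ)) + 5) * (((k:ℤ)) + 6) * (((k:ℤ)) + 7) := by
    have h := ch3_aux (k + 4)
    have e : k + 5 + 2 = k + 4 + 3 := by omega
    rw [e]; exact_mod_cast h
  have h2 : ((k + 5).choose 3 : ℤ) * 6 = (((k:ℤ)) + 3) * (((k:ℤ)) + 4) * (((k:ℤ)) + 5) := by
    have h := ch3_aux (k + 2)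
    have e : k + 5 = k + 2 + 3 := by omega
    rw [e]; exact_mod_cast h
  have ha' : 3 * (a : ℤ) + 1 < ((k:ℤ)) + 5 := by exact_mod_cast had
  have ha0 : 1 ≤ (a : ℤ) := by exact_mod_cast ha
  push_cast at hbc huv hcd hvd ⊢
  have hb6 : (((k:ℤ)) + 5) * b * 6 = (((k:ℤ)) + 5) * (((k:ℤ)) + 6) * (((k:ℤ)) + 7) - 6 * (a : ℤ) * (3 * ((k:ℤ)) + 13) - 6 * c := by
    linear_combination 6 * hbc + h1
  have hu6 : (((k:ℤ)) + 3) * u * 6 = (((k:ℤ)) + 3) * (((k:ℤ)) + 4) * (((k:ℤ)) + 5) + 6 * v := by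
    linear_combination 6 * huv + h2
  have hb' : (((k:ℤ)) + 3) * ((((k:ℤ)) + 5) * b * 6) = (((k:ℤ)) + 3) * ((((k:ℤ)) + 5) * (((k:ℤ)) + 6) * (((k:ℤ)) + 7) - 6 * (a : ℤ) * (3 * ((k:ℤ)) + 13) - 6 * c) := by rw [hb6]
  have hu' : (((k:ℤ)) + 5) * ((((k:ℤ)) + 3) * u * 6) = (((k:ℤ)) + 5) * ((((k:ℤ)) + 3) * (((k:ℤ)) + 4) * (((k:ℤ)) + 5) + 6 * v) := by rw [hu6]
  by_contra hneg
  push_neg at hneg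
  have hneg' : u - (a : ℤ) ≥ b + 2 := by linarith
  have hkpos : (0 : ℤ) ≤ ((k:ℤ)) := by positivity
  have hmul : 6 * ((((k:ℤ)) + 3) * (((k:ℤ)) + 5)) * (u - (a : ℤ)) ≥ 6 * ((((k:ℤ)) + 3) * (((k:ℤ)) + 5)) * (b + 2) := by
    apply mul_le_mul_of_nonneg_left hneg'
    nlinarith
  nlinarith [hb', hu', hmul, hkpos, mul_nonneg (mul_nonneg (by linarith : (0:ℤ) ≤ ((k:ℤ)) + 3 - 3 * a) (by linarith : (0:ℤ) ≤ ((k:ℤ)) + 4)) (by linarith : (0:ℤ) ≤ ((k:ℤ)) + 3),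
    mul_nonneg (by linarith : (0:ℤ) ≤ ((k:ℤ)) + 4 - c) (by linarith : (0:ℤ) ≤ ((k:ℤ)) + 3),
    mul_nonneg (by linarith : (0:ℤ) ≤ ((k:ℤ)) + 2 - v) (by linarith : (0:ℤ) ≤ ((k:ℤ)) + 5), hkpos]
end
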